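/- Let T ∈ ℕ and let (u_t)_{t≥1} be a sequence of real numbers with u_t ∈ [0,1] for all t. Set U_0 = 0 and U_t = Σ_{ℓ=1}^t u_ℓ. Then Σ_{t=0}^T u_{t+1} / max(U_t, 1) ≤ 4 · log(U_{T+1} + 1). -/

import Mathlib

open Finset

lemma half_le_log_aux (x : ℝ) (h0 : 0 ≤ x) (h1 : x ≤ 1) :
    x / 2 ≤ Real.log (1 + x) := by
  have hx : (0:ℝ) < 1 + x := by linarith
  have h := Real.log_le_sub_one_of_pos (show (0:ℝ) < (1+x)⁻¹ by positivity)
  rw [Real.log_inv] at h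
  have hmul : (1 + x) * (1 + x)⁻¹ = 1 := mul_inv_cancel₀ (ne_of_gt hx)
  have hinvpos : (0:ℝ) ≤ (1+x)⁻¹ := by positivity
  have hinv : (1+x)⁻¹ ≤ 1 - x/2 := by nlinarith [sq_nonneg x]
  linarith

/-- For a sequence `(u_t)_{t ≥ 1}` with values in `[0,1]` and partial sums
`U_t = Σ_{ℓ=1}^t u_ℓ`, we have `Σ_{t=0}^T u_{t+1} / max(U_t, 1) ≤ 4 log(U_{T+1} + 1)`. -/
theorem sum_one_over_pseudocount (T : ℕ) (u : ℕ → ℝ)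
    (hu : ∀ t, 1 ≤ t → u t ∈ Set.Icc (0 : ℝ) 1) :
    ∑ t ∈ Finset.range (T + 1),
        u (t + 1) / max (∑ ℓ ∈ Finset.Icc 1 t, u ℓ) 1
      ≤ 4 * Real.log ((∑ ℓ ∈ Finset.Icc 1 (T + 1), u ℓ) + 1) := by
  set f : ℕ → ℝ := fun t => 4 * Real.log ((∑ ℓ ∈ Finset.Icc 1 t, u ℓ) + 1) with hf
  have tele : ∑ t ∈ Finset.range (T + 1), (f (t + 1) - f t) = f (T + 1) - f 0 :=
    Finset.sum_range_sub f (T + 1)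
  have hf0 : f 0 = 0 := by simp [hf]
  have hstep : ∀ t ∈ Finset.range (T + 1),
      u (t + 1) / max (∑ ℓ ∈ Finset.Icc 1 t, u ℓ) 1 ≤ f (t + 1) - f t := by
    intro t _
    set a : ℝ := ∑ ℓ ∈ Finset.Icc 1 t, u ℓ with ha
    have ha0 : 0 ≤ a := by
      apply Finset.sum_nonneg
      intro ℓ hℓ
      exact (hu ℓ (Finset.mem_Icc.mp hℓ).1).1
    set v : ℝ := u (t + 1) with hv
    have hv0 : 0 ≤ v := (hu (t + 1) (Nat.le_add_left 1 t)).1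
    have hv1 : v ≤ 1 := (hu (t + 1) (Nat.le_add_left 1 t)).2
    have hsum : ∑ ℓ ∈ Finset.Icc 1 (t + 1), u ℓ = a + v := by
      rw [Finset.sum_Icc_succ_top (Nat.le_add_left 1 t)]
    have ha1 : (0:ℝ) < a + 1 := by linarith
    have hx0 : 0 ≤ v / (a + 1) := by positivity
    have hx1 : v / (a + 1) ≤ 1 := by
      rw [div_le_one ha1]; linarith
    have hlog := half_le_log_aux _ hx0 hx1
    have heq : 1 + v / (a + 1) = (a + v + 1) / (a + 1) := by
      field_simp; ring
    rw [heq, Real.log_div (by linarith) (ne_of_gt ha1)] at hlog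
    -- hlog : v / (a+1) / 2 ≤ log (a+v+1) - log (a+1)
    have hm : (0:ℝ) < max a 1 := lt_of_lt_of_le one_pos (le_max_right a 1)
    have hmax : a + 1 ≤ 2 * max a 1 := by
      have := le_max_left a 1
      have := le_max_right a 1
      linarith
    have hdiv : v / max a 1 ≤ 2 * (v / (a + 1)) := by
      rw [div_le_iff₀ hm]
      have h2 : v / (a + 1) * (a + 1) = v := div_mul_cancel₀ v (ne_of_gt ha1)
      nlinarith [hx0, hmax, h2]
    have hfdiff : f (t + 1) - f t =
        4 * (Real.log (a + v + 1) - Real.log (a + 1)) := by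
      simp only [hf, hsum, ← ha]
      ring
    rw [hfdiff]
    linarith
  calc ∑ t ∈ Finset.range (T + 1), u (t + 1) / max (∑ ℓ ∈ Finset.Icc 1 t, u ℓ) 1
      ≤ ∑ t ∈ Finset.range (T + 1), (f (t + 1) - f t) := Finset.sum_le_sum hstep
    _ = f (T + 1) - f 0 := tele
    _ = 4 * Real.log ((∑ ℓ ∈ Finset.Icc 1 (T + 1), u ℓ) + 1) := by rw [hf0]; simp [hf]
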